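/- arXiv:2003.14280 — 6 statements merged into one kernel-verified Lean document; each statement's English description precedes it below -/
import Mathlib

section
/- Let W be a nonnegative random variable with E[W] = 1 and E[W²] ≤ e^{cN} for some c > 0 and N ≥ 1. Then there exists η ∈ [1/2, e^{CN}] (for some constant C depending only on c, for N sufficiently large) such that P(W ≥ η) ≥ c'/(η·(2 + log η)²) for an absolute constant c' > 0. -/
open MeasureTheory

private lemma sumsq (n : ℕ) : ∑ k ∈ Finset.range n, (1:ℝ)/((k:ℝ)+1)^2 ≤ 2 := by
  have h : ∀ m : ℕ, ∑ k ∈ Finset.range (m+1), (1:ℝ)/((k:ℝ)+1)^2 ≤ 2 - 1/((m:ℝ)+1) := by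
    intro m
    induction m with
    | zero => norm_num
    | succ m ih =>
      rw [Finset.sum_range_succ]
      have hm : (0:ℝ) ≤ (m:ℝ) := Nat.cast_nonneg m
      have h1 : (1:ℝ)/(((m+1:ℕ):ℝ)+1)^2 ≤ 1/((m:ℝ)+1) - 1/((m:ℝ)+1+1) := by
        push_cast
        rw [div_sub_div _ _ (by positivity) (by positivity), div_le_div_iff₀ (by positivity) (by positivity)]
        nlinarith
      push_cast at ih h1 ⊢
      linarith
  cases n with
  | zero => simp
  | succ m =>
    have h1 := h m
    have h3 : (0:ℝ) ≤ 1/((m:ℝ)+1) := by positivity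
    linarith

set_option maxHeartbeats 1600000 in
theorem stmt3 :
    ∃ c' > (0:ℝ), ∀ c > (0:ℝ), ∃ C > (0:ℝ), ∃ N₀ : ℕ, ∀ N : ℕ, N₀ ≤ N → 1 ≤ N →
    ∀ (Ω : Type) (_ : MeasurableSpace Ω) (μ : Measure Ω) (_ : IsProbabilityMeasure μ)
      (W : Ω → ℝ), Measurable W → (∀ ω, 0 ≤ W ω) →
      Integrable W μ → (∫ ω, W ω ∂μ = 1) →
      Integrable (fun ω => (W ω)^2) μ → (∫ ω, (W ω)^2 ∂μ ≤ Real.exp (c * N)) →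
      ∃ η : ℝ, η ∈ Set.Icc (1/2 : ℝ) (Real.exp (C * N)) ∧
        c' / (η * (2 + Real.log η)^2) ≤ (μ {x | η ≤ W x}).toReal := by
  have hlog2 : (0.6931471803 : ℝ) < Real.log 2 := Real.log_two_gt_d9
  have hlog2' : Real.log 2 < 0.6931471808 := Real.log_two_lt_d9
  have hlog2pos : (0:ℝ) < Real.log 2 := by linarith
  refine ⟨1/40, by norm_num, ?_⟩
  intro c hc
  refine ⟨c + 3, by linarith, 1, ?_⟩
  intro N _ hN1 Ω mΩ μ hμ W hWmeas hWpos hWint hWmean hW2int hW2bound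
  have hN1' : (1:ℝ) ≤ (N:ℝ) := by exact_mod_cast hN1
  set K : ℕ := ⌈(c * N + 2) / Real.log 2⌉₊ with hKdef
  -- 2^K bounds
  have h2K : (2:ℝ)^K = Real.exp (K * Real.log 2) := by
    rw [← Real.log_pow, Real.exp_log (by positivity)]
  have hKge : c * N + 2 ≤ K * Real.log 2 := by
    rw [← div_le_iff₀ hlog2pos] at *
    exact Nat.le_ceil _
  have hKle : (K:ℝ) * Real.log 2 ≤ c * N + 3 := by
    have h1 : (K:ℝ) < (c * N + 2) / Real.log 2 + 1 := by
      apply Nat.ceil_lt_add_one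
      positivity
    have h2 : (K:ℝ) * Real.log 2 < ((c * N + 2) / Real.log 2 + 1) * Real.log 2 := by
      exact mul_lt_mul_of_pos_right h1 hlog2pos
    rw [add_mul, div_mul_cancel₀ _ (ne_of_gt hlog2pos)] at h2
    linarith
  have h2Klb : Real.exp (c * N + 2) ≤ (2:ℝ)^K := by
    rw [h2K]; exact Real.exp_le_exp.mpr hKge
  have h2Kub : (2:ℝ)^K ≤ Real.exp ((c + 3) * N) := by
    rw [h2K]
    apply Real.exp_le_exp.mpr
    nlinarith
  -- sets and their measures
  set S : ℕ → Set Ω := fun k => {x | (2:ℝ)^k / 2 ≤ W x} with hSdef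
  have hS : ∀ k, MeasurableSet (S k) := fun k => hWmeas measurableSet_Ici
  set p : ℕ → ℝ := fun k => (μ (S k)).toReal with hpdef
  have hppos : ∀ k, 0 ≤ p k := fun k => ENNReal.toReal_nonneg
  -- pointwise bound
  have hpt : ∀ ω, W ω ≤ 1/2 + (W ω)^2/(2:ℝ)^K
      + ∑ k ∈ Finset.range (K+1), (S k).indicator (fun _ => (2:ℝ)^k) ω := by
    intro ω
    have hsumnn : 0 ≤ ∑ k ∈ Finset.range (K+1), (S k).indicator (fun _ => (2:ℝ)^k) ω :=
      Finset.sum_nonneg fun k _ => Set.indicator_nonneg (fun _ _ => by positivity) ω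
    have hsqnn : 0 ≤ (W ω)^2/(2:ℝ)^K := by positivity
    rcases lt_or_ge (W ω) (1/2) with hw | hw
    · linarith
    rcases le_or_gt ((2:ℝ)^K) (W ω) with hT | hT
    · have h1 : (1:ℝ) ≤ (2:ℝ)^K := one_le_pow₀ (by norm_num)
      have : W ω ≤ (W ω)^2/(2:ℝ)^K := by
        rw [le_div_iff₀ (by positivity)]
        nlinarith
      linarith
    · -- find least k with W ω < 2^k
      have hex : ∃ k : ℕ, W ω < (2:ℝ)^k := ⟨K, hT⟩
      set k := Nat.find hex with hkd
      have hklt : W ω < (2:ℝ)^k := Nat.find_spec hex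
      have hkK : k ≤ K := Nat.find_min' hex hT
      have hlb : (2:ℝ)^k / 2 ≤ W ω := by
        by_cases h0 : k = 0
        · rw [h0]; simpa using hw
        · have h1 : k - 1 < k := Nat.sub_lt (Nat.pos_of_ne_zero h0) one_pos
          have h2 := Nat.find_min hex h1
          push_neg at h2
          have h3 : (2:ℝ)^k = (2:ℝ)^(k-1) * 2 := by
            conv_lhs => rw [show k = (k-1)+1 from (Nat.succ_pred_eq_of_pos (Nat.pos_of_ne_zero h0)).symm]
            rw [pow_succ]
          rw [h3]
          linarith
      have hmem : ω ∈ S k := hlb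
      have hterm : (S k).indicator (fun _ => (2:ℝ)^k) ω = (2:ℝ)^k := by
        simp [Set.indicator_of_mem hmem]
      have hsingle : (2:ℝ)^k ≤ ∑ j ∈ Finset.range (K+1), (S j).indicator (fun _ => (2:ℝ)^j) ω := by
        rw [← hterm]
        apply Finset.single_le_sum (f := fun j => (S j).indicator (fun _ => (2:ℝ)^j) ω)
          (fun j _ => Set.indicator_nonneg (fun _ _ => by positivity) ω)
        exact Finset.mem_range.mpr (by omega)
      linarith
  -- integrability
  have hInd : ∀ k, Integrable ((S k).indicator (fun _ => (2:ℝ)^k)) μ :=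
    fun k => (integrable_const _).indicator (hS k)
  have hSum : Integrable (fun ω => ∑ k ∈ Finset.range (K+1), (S k).indicator (fun _ => (2:ℝ)^k) ω) μ :=
    integrable_finset_sum _ fun k _ => hInd k
  have hRint : Integrable (fun ω => 1/2 + (W ω)^2/(2:ℝ)^K
      + ∑ k ∈ Finset.range (K+1), (S k).indicator (fun _ => (2:ℝ)^k) ω) μ :=
    ((integrable_const _).add (hW2int.div_const _)).add hSum
  -- integrate
  have hmono : ∫ ω, W ω ∂μ ≤ ∫ ω, (1/2 + (W ω)^2/(2:ℝ)^K
      + ∑ k ∈ Finset.range (K+1), (S k).indicator (fun _ => (2:ℝ)^k) ω) ∂μ :=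
    integral_mono hWint hRint hpt
  have e1 : ∫ ω, (1/2 + (W ω)^2/(2:ℝ)^K
      + ∑ k ∈ Finset.range (K+1), (S k).indicator (fun _ => (2:ℝ)^k) ω) ∂μ
      = (∫ ω, (1/2 + (W ω)^2/(2:ℝ)^K) ∂μ)
      + ∫ ω, (∑ k ∈ Finset.range (K+1), (S k).indicator (fun _ => (2:ℝ)^k) ω) ∂μ :=
    integral_add ((integrable_const _).add (hW2int.div_const _)) hSum
  have e2 : ∫ ω, (1/2 + (W ω)^2/(2:ℝ)^K) ∂μ
      = (∫ _ω, (1/2:ℝ) ∂μ) + ∫ ω, (W ω)^2/(2:ℝ)^K ∂μ :=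
    integral_add (integrable_const _) (hW2int.div_const _)
  have e3 : ∫ _ω, (1/2:ℝ) ∂μ = 1/2 := by simp
  have e4 : ∫ ω, (W ω)^2/(2:ℝ)^K ∂μ = (∫ ω, (W ω)^2 ∂μ)/(2:ℝ)^K := integral_div _ _
  have e5 : ∫ ω, (∑ k ∈ Finset.range (K+1), (S k).indicator (fun _ => (2:ℝ)^k) ω) ∂μ
      = ∑ k ∈ Finset.range (K+1), ∫ ω, (S k).indicator (fun _ => (2:ℝ)^k) ω ∂μ :=
    integral_finset_sum _ fun k _ => hInd k
  have e6 : ∀ k, ∫ ω, (S k).indicator (fun _ => (2:ℝ)^k) ω ∂μ = (2:ℝ)^k * p k := by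
    intro k
    rw [integral_indicator_const _ (hS k)]
    simp [hpdef, mul_comm, Measure.real]
  have hRval : ∫ ω, (1/2 + (W ω)^2/(2:ℝ)^K
      + ∑ k ∈ Finset.range (K+1), (S k).indicator (fun _ => (2:ℝ)^k) ω) ∂μ
      = 1/2 + (∫ ω, (W ω)^2 ∂μ)/(2:ℝ)^K + ∑ k ∈ Finset.range (K+1), (2:ℝ)^k * p k := by
    rw [e1, e2, e3, e4, e5]
    congr 1
    exact Finset.sum_congr rfl fun k _ => e6 k
  rw [hWmean, hRval] at hmono
  -- tail term small
  have htail : (∫ ω, (W ω)^2 ∂μ)/(2:ℝ)^K ≤ 1/7 := by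
    have h1 : (∫ ω, (W ω)^2 ∂μ)/(2:ℝ)^K ≤ Real.exp (c*N) / Real.exp (c*N+2) := by
      apply div_le_div₀ (Real.exp_pos _).le hW2bound (by positivity) h2Klb
    have h2 : Real.exp (c*N) / Real.exp (c*N+2) = 1 / Real.exp 2 := by
      rw [Real.exp_add, div_mul_eq_div_div, div_self (Real.exp_pos _).ne']
    have h3 : (7:ℝ) ≤ Real.exp 2 := by
      have he : (2.7182818283:ℝ) < Real.exp 1 := Real.exp_one_gt_d9
      have : Real.exp 2 = Real.exp 1 * Real.exp 1 := by
        rw [← Real.exp_add]; norm_num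
      nlinarith
    have h4 : (1:ℝ) / Real.exp 2 ≤ 1/7 := by
      apply one_div_le_one_div_of_le (by norm_num) h3
    linarith
  -- pigeonhole
  have hkey : ∃ k ∈ Finset.range (K+1), (1/8)/((2:ℝ)^k*((k:ℝ)+1)^2) ≤ p k := by
    by_contra hcon
    push_neg at hcon
    have hlt : ∑ k ∈ Finset.range (K+1), (2:ℝ)^k * p k
        < ∑ k ∈ Finset.range (K+1), (1/8:ℝ)/(((k:ℝ)+1)^2) := by
      apply Finset.sum_lt_sum_of_nonempty ⟨0, by simp⟩
      intro k hk
      have h := hcon k hk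
      have h2 : (2:ℝ)^k * p k < (2:ℝ)^k * ((1/8)/((2:ℝ)^k*((k:ℝ)+1)^2)) :=
        mul_lt_mul_of_pos_left h (by positivity)
      have h3 : (2:ℝ)^k * ((1/8)/((2:ℝ)^k*((k:ℝ)+1)^2)) = (1/8:ℝ)/(((k:ℝ)+1)^2) := by
        have h2kne : ((2:ℝ)^k) ≠ 0 := by positivity
        field_simp
      rw [h3] at h2
      exact h2
    have hsum2 : ∑ k ∈ Finset.range (K+1), (1/8:ℝ)/(((k:ℝ)+1)^2) ≤ 1/4 := by
      have hs := sumsq (K+1)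
      have he : ∑ k ∈ Finset.range (K+1), (1/8:ℝ)/(((k:ℝ)+1)^2)
          = (1/8) * ∑ k ∈ Finset.range (K+1), (1:ℝ)/(((k:ℝ)+1)^2) := by
        rw [Finset.mul_sum]
        exact Finset.sum_congr rfl fun k _ => by ring
      rw [he]
      linarith
    linarith
  obtain ⟨k, hkmem, hpk⟩ := hkey
  have hkK : k ≤ K := Nat.lt_succ_iff.mp (Finset.mem_range.mp hkmem)
  have h2kpos : (0:ℝ) < 2^k := by positivity
  have h2k1 : (1:ℝ) ≤ 2^k := one_le_pow₀ (by norm_num)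
  refine ⟨(2:ℝ)^k / 2, ⟨?_, ?_⟩, ?_⟩
  · linarith
  · have h1 : (2:ℝ)^k ≤ (2:ℝ)^K := pow_le_pow_right₀ (by norm_num) hkK
    have h2 : (0:ℝ) < 2^K := by positivity
    linarith
  · -- final bound
    clear hpt hInd hSum hRint hmono hRval e1 e2 e3 e4 e5 e6 htail hW2bound hW2int hWint hWmean hS hppos
    have hlogη : Real.log ((2:ℝ)^k/2) = k * Real.log 2 - Real.log 2 := by
      rw [Real.log_div (by positivity) (by norm_num), Real.log_pow]
    have hX : ((k:ℝ)+1) * Real.log 2 ≤ 2 + Real.log ((2:ℝ)^k/2) := by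
      rw [hlogη]
      linarith
    have hXpos : (0:ℝ) < 2 + Real.log ((2:ℝ)^k/2) := by
      have : (0:ℝ) < ((k:ℝ)+1) * Real.log 2 := by positivity
      linarith
    have hL2 : (0.48:ℝ) ≤ (Real.log 2)^2 := by
      have hm : (0.6931471803:ℝ)*0.6931471803 ≤ Real.log 2 * Real.log 2 :=
        mul_le_mul hlog2.le hlog2.le (by norm_num) (by linarith)
      calc (0.48:ℝ) ≤ 0.6931471803*0.6931471803 := by norm_num
        _ ≤ Real.log 2 * Real.log 2 := hm
        _ = (Real.log 2)^2 := (sq (Real.log 2)).symm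
    have hsq : (((k:ℝ)+1)*Real.log 2)^2 ≤ (2 + Real.log ((2:ℝ)^k/2))^2 :=
      pow_le_pow_left₀ (by positivity) hX 2
    have hk1 : (0:ℝ) ≤ ((k:ℝ)+1)^2 := by positivity
    have key : (1/40:ℝ) / (((2:ℝ)^k/2) * (2 + Real.log ((2:ℝ)^k/2))^2)
        ≤ (1/8)/((2:ℝ)^k*((k:ℝ)+1)^2) := by
      rw [div_le_div_iff₀ (by positivity) (by positivity)]
      have hstep1 : ((k:ℝ)+1)^2 * 0.48 ≤ (2 + Real.log ((2:ℝ)^k/2))^2 := by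
        calc ((k:ℝ)+1)^2 * 0.48 ≤ ((k:ℝ)+1)^2 * (Real.log 2)^2 :=
              mul_le_mul_of_nonneg_left hL2 hk1
          _ = (((k:ℝ)+1)*Real.log 2)^2 := by ring
          _ ≤ _ := hsq
      have hstep2 : (2:ℝ)^k * (((k:ℝ)+1)^2 * 0.48) ≤ (2:ℝ)^k * (2 + Real.log ((2:ℝ)^k/2))^2 :=
        mul_le_mul_of_nonneg_left hstep1 h2kpos.le
      nlinarith [hstep2]
    exact le_trans key hpk
end

section
/- Let W₁, W₂, ... be nonnegative random variables with E[W_N] = 1 for all N, and let 𝕡̃_N be the size-biased measure defined by d𝕡̃_N/dP = W_N. If for every L > 0 we have 𝕡̃_N(W_N ≥ L) → 1 as N → ∞, then W_N → 0 in probability under P. -/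
open MeasureTheory Filter
open scoped ENNReal

theorem stmt4 {Ω : Type*} [MeasurableSpace Ω] (μ : Measure Ω) [IsProbabilityMeasure μ]
    (W : ℕ → Ω → ℝ) (hmeas : ∀ N, Measurable (W N)) (hpos : ∀ N ω, 0 ≤ W N ω)
    (hint : ∀ N, Integrable (W N) μ) (hmean : ∀ N, ∫ ω, W N ω ∂μ = 1)
    (h : ∀ L > (0:ℝ),
      Tendsto (fun N => ∫ ω, Set.indicator {x | L ≤ W N x} (W N) ω ∂μ) atTop (nhds 1)) :
    TendstoInMeasure μ W atTop (fun _ => (0:ℝ)) := by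
  rw [tendstoInMeasure_iff_dist]
  intro ε hε
  have hset : ∀ N, {x | ε ≤ dist (W N x) 0} = {x | ε ≤ W N x} := by
    intro N
    ext x
    simp [Real.dist_eq, abs_of_nonneg (hpos N x)]
  simp only [hset]
  rw [ENNReal.tendsto_nhds_zero]
  intro δ hδ
  have hδ2 : (0:ℝ≥0∞) < δ / 2 := ENNReal.div_pos hδ.ne' (by norm_num)
  obtain ⟨n, hn⟩ := ENNReal.exists_inv_nat_lt hδ2.ne'
  set L : ℝ := max ε (n + 1) with hLdef
  have hL0 : 0 < L := lt_of_lt_of_le hε (le_max_left _ _)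
  have hεL : ε ≤ L := le_max_left _ _
  -- measurable sets
  have hSmeas : ∀ N, MeasurableSet {x | L ≤ W N x} := fun N =>
    (hmeas N) measurableSet_Ici
  -- total lintegral is 1
  have hg : ∀ N, ∫⁻ ω, ENNReal.ofReal (W N ω) ∂μ = 1 := by
    intro N
    rw [← ofReal_integral_eq_lintegral_ofReal (hint N)
      (Filter.Eventually.of_forall (hpos N)), hmean N]
    simp
  -- lintegral over the set equals ofReal of the indicator integral
  have haeq : ∀ N, ∫⁻ ω in {x | L ≤ W N x}, ENNReal.ofReal (W N ω) ∂μ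
      = ENNReal.ofReal (∫ ω, Set.indicator {x | L ≤ W N x} (W N) ω ∂μ) := by
    intro N
    rw [integral_indicator (hSmeas N)]
    rw [ofReal_integral_eq_lintegral_ofReal ((hint N).restrict)
      (Filter.Eventually.of_forall (hpos N))]
  have ha : Tendsto (fun N => ∫⁻ ω in {x | L ≤ W N x}, ENNReal.ofReal (W N ω) ∂μ)
      atTop (nhds 1) := by
    simp only [haeq]
    have := (ENNReal.continuous_ofReal.tendsto 1).comp (h L hL0)
    simpa [Function.comp_def] using this
  -- small positive threshold
  set η : ℝ≥0∞ := min (ENNReal.ofReal ε * (δ / 2)) 1 with hηdef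
  have hη0 : 0 < η := by
    apply lt_min _ one_pos
    exact ENNReal.mul_pos (ENNReal.ofReal_pos.mpr hε).ne' hδ2.ne'
  have hη1 : η ≤ 1 := min_le_right _ _
  have hηε : η ≤ ENNReal.ofReal ε * (δ / 2) := min_le_left _ _
  have hlt : (1:ℝ≥0∞) - η < 1 := ENNReal.sub_lt_self ENNReal.one_ne_top one_ne_zero hη0.ne'
  have hev := ha.eventually (eventually_gt_nhds hlt)
  filter_upwards [hev] with N hN
  set S := {x | L ≤ W N x} with hSdef
  set a := ∫⁻ ω in S, ENNReal.ofReal (W N ω) ∂μ with hadef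
  set b := ∫⁻ ω in Sᶜ, ENNReal.ofReal (W N ω) ∂μ with hbdef
  have hab : a + b = 1 := by
    rw [hadef, hbdef, lintegral_add_compl _ (hSmeas N), hg N]
  have ha1 : a ≤ 1 := le_of_le_of_eq le_self_add hab
  have hbeq : b = 1 - a := by
    rw [← hab]; exact (ENNReal.add_sub_cancel_left (ne_top_of_le_ne_top ENNReal.one_ne_top ha1)).symm
  have hbη : b ≤ η := by
    rw [hbeq]
    calc 1 - a ≤ 1 - (1 - η) := tsub_le_tsub_left hN.le 1
    _ = η := ENNReal.sub_sub_cancel ENNReal.one_ne_top hη1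
  -- Markov bound on S
  have hμS : μ S ≤ δ / 2 := by
    have hSeq : S = {x | ENNReal.ofReal L ≤ ENNReal.ofReal (W N x)} := by
      ext x
      simp [hSdef, ENNReal.ofReal_le_ofReal_iff (hpos N x)]
    have hmark := meas_ge_le_lintegral_div (μ := μ)
      ((ENNReal.measurable_ofReal.comp (hmeas N)).aemeasurable)
      (ε := ENNReal.ofReal L) (by simp [hL0]) ENNReal.ofReal_ne_top
    simp only [Function.comp_def] at hmark
    rw [← hSeq, hg N] at hmark
    have hLn : ((n:ℝ≥0∞) + 1)⁻¹ ≤ (n:ℝ≥0∞)⁻¹ := ENNReal.inv_le_inv.mpr le_self_add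
    have hLge : ((n:ℝ≥0∞) + 1) ≤ ENNReal.ofReal L := by
      have : ((n:ℝ) + 1) ≤ L := le_max_right _ _
      calc ((n:ℝ≥0∞) + 1) = ENNReal.ofReal ((n:ℝ) + 1) := by
            rw [ENNReal.ofReal_add (by positivity) zero_le_one]
            simp
      _ ≤ ENNReal.ofReal L := ENNReal.ofReal_le_ofReal this
    calc μ S ≤ 1 / ENNReal.ofReal L := hmark
    _ = (ENNReal.ofReal L)⁻¹ := one_div _
    _ ≤ ((n:ℝ≥0∞) + 1)⁻¹ := ENNReal.inv_le_inv.mpr hLge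
    _ ≤ (n:ℝ≥0∞)⁻¹ := hLn
    _ ≤ δ / 2 := hn.le
  -- bound on the middle part
  have hμmid : μ (Sᶜ ∩ {x | ε ≤ W N x}) ≤ δ / 2 := by
    have hkey : ENNReal.ofReal ε * μ (Sᶜ ∩ {x | ε ≤ W N x}) ≤ b := by
      have h1 : ENNReal.ofReal ε * μ (Sᶜ ∩ {x | ε ≤ W N x})
          = ∫⁻ _ω in Sᶜ ∩ {x | ε ≤ W N x}, ENNReal.ofReal ε ∂μ := by
        rw [setLIntegral_const]
      rw [h1]
      calc ∫⁻ _ω in Sᶜ ∩ {x | ε ≤ W N x}, ENNReal.ofReal ε ∂μ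
          ≤ ∫⁻ ω in Sᶜ ∩ {x | ε ≤ W N x}, ENNReal.ofReal (W N ω) ∂μ := by
            apply setLIntegral_mono (ENNReal.measurable_ofReal.comp (hmeas N))
            intro x hx
            exact ENNReal.ofReal_le_ofReal hx.2
      _ ≤ b := lintegral_mono_set Set.inter_subset_left
    have hkey2 : ENNReal.ofReal ε * μ (Sᶜ ∩ {x | ε ≤ W N x})
        ≤ ENNReal.ofReal ε * (δ / 2) := le_trans hkey (le_trans hbη hηε)
    exact (ENNReal.mul_le_mul_iff_right (ENNReal.ofReal_pos.mpr hε).ne' ENNReal.ofReal_ne_top).mp hkey2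
  have hsub : {x | ε ≤ W N x} ⊆ S ∪ (Sᶜ ∩ {x | ε ≤ W N x}) := by
    intro x hx
    by_cases hxS : x ∈ S
    · exact Or.inl hxS
    · exact Or.inr ⟨hxS, hx⟩
  calc μ {x | ε ≤ W N x} ≤ μ (S ∪ (Sᶜ ∩ {x | ε ≤ W N x})) := measure_mono hsub
  _ ≤ μ S + μ (Sᶜ ∩ {x | ε ≤ W N x}) := measure_union_le _ _
  _ ≤ δ / 2 + δ / 2 := add_le_add hμS hμmid
  _ = δ := ENNReal.add_halves δ
end

section
/- Let X₁, ..., X_n be i.i.d. integer-valued random variables each with a symmetric unimodal distribution (i.e., P(X=k) is symmetric around 0 and nonincreasing in |k|). Then S_n = X₁ + ... + X_n also has a symmetric unimodal distribution. -/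
open MeasureTheory ProbabilityTheory

-- monotonicity on nonneg part for unimodal functions
lemma su_mono {g : ℤ → ℝ} (hu : ∀ m : ℤ, 0 ≤ m → g (m + 1) ≤ g m) :
    ∀ a b : ℤ, 0 ≤ a → a ≤ b → g b ≤ g a := by
  intro a b ha hab
  exact Int.le_induction (motive := fun b _ => g b ≤ g a) le_rfl
    (fun n hn ih => (hu n (ha.trans hn)).trans ih) b hab

lemma su_key {g : ℤ → ℝ} (hsym : ∀ m, g (-m) = g m) (hu : ∀ m : ℤ, 0 ≤ m → g (m + 1) ≤ g m)
    {k n : ℤ} (hk : 0 ≤ k) (hn : 0 ≤ n) : g (k + n + 1) ≤ g (k - n) := by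
  rcases le_total n k with h | h
  · exact su_mono hu (k - n) (k + n + 1) (by omega) (by omega)
  · have h2 : g (k - n) = g (n - k) := by
      rw [show k - n = -(n - k) by ring, hsym]
    rw [h2]
    exact su_mono hu (n - k) (k + n + 1) (by omega) (by omega)

lemma conv_summable {f g : ℤ → ℝ} (hf0 : ∀ m, 0 ≤ f m) (hg0 : ∀ m, 0 ≤ g m)
    (hg1 : ∀ m, g m ≤ 1) (hfs : Summable f) (c : ℤ) :
    Summable fun m => f m * g (c - m) :=
  Summable.of_nonneg_of_le (fun m => mul_nonneg (hf0 m) (hg0 _))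
    (fun m => mul_le_of_le_one_right (hf0 m) (hg1 _)) hfs

lemma conv_symm {f g : ℤ → ℝ} (hfsym : ∀ m, f (-m) = f m) (hgsym : ∀ m, g (-m) = g m) (k : ℤ) :
    ∑' m, f m * g (-k - m) = ∑' m, f m * g (k - m) := by
  rw [← (Equiv.neg ℤ).tsum_eq (fun m => f m * g (-k - m))]
  refine tsum_congr fun m => ?_
  simp only [Equiv.neg_apply]
  rw [hfsym, show -k - -m = -(k - m) by ring, hgsym]

lemma conv_flip {f g : ℤ → ℝ} (c : ℤ) :
    ∑' m, f m * g (c - m) = ∑' m, f (c - m) * g m := by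
  rw [← (Equiv.subLeft c).tsum_eq (fun m => f m * g (c - m))]
  exact tsum_congr fun m => by simp [sub_sub_cancel]

lemma conv_mono {f g : ℤ → ℝ} (hf0 : ∀ m, 0 ≤ f m) (hg0 : ∀ m, 0 ≤ g m)
    (hg1 : ∀ m, g m ≤ 1) (hfs : Summable f)
    (hfsym : ∀ m, f (-m) = f m) (hgsym : ∀ m, g (-m) = g m)
    (hfu : ∀ m : ℤ, 0 ≤ m → f (m + 1) ≤ f m) (hgu : ∀ m : ℤ, 0 ≤ m → g (m + 1) ≤ g m)
    (k : ℤ) (hk : 0 ≤ k) :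
    ∑' m, f m * g (k + 1 - m) ≤ ∑' m, f m * g (k - m) := by
  rw [← sub_nonneg]
  have S1 : Summable fun m => f m * g (k - m) := conv_summable hf0 hg0 hg1 hfs k
  have S2 : Summable fun m => f m * g (k + 1 - m) := conv_summable hf0 hg0 hg1 hfs (k + 1)
  have Sf1 : Summable fun j => f (k - j) * g j := by
    have := (Equiv.subLeft k).summable_iff.mpr S1
    refine this.congr fun j => ?_
    simp [sub_sub_cancel]
  have Sf2 : Summable fun j => f (k + 1 - j) * g j := by
    have := (Equiv.subLeft (k + 1)).summable_iff.mpr S2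
    refine this.congr fun j => ?_
    simp [sub_sub_cancel]
  set H : ℤ → ℝ := fun j => (f j - f (j + 1)) * g (k - j) with hH
  have SH : Summable H := by
    have h2 : Summable fun j => f (j + 1) * g (k - j) := by
      refine Summable.of_nonneg_of_le (fun j => mul_nonneg (hf0 _) (hg0 _))
        (fun j => mul_le_of_le_one_right (hf0 _) (hg1 _)) ?_
      exact (Equiv.addRight (1 : ℤ)).summable_iff.mpr hfs
    have := S1.sub h2
    refine this.congr fun j => ?_
    simp [hH, sub_mul]
  have hD : ∑' m, f m * g (k - m) - ∑' m, f m * g (k + 1 - m) = ∑' j, H j := by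
    rw [conv_flip, conv_flip, ← Summable.tsum_sub Sf1 Sf2]
    rw [← (Equiv.subLeft k).tsum_eq H]
    refine tsum_congr fun j => ?_
    simp only [hH, Equiv.subLeft_apply, sub_sub_cancel, sub_mul]
    ring_nf
  rw [hD, ← tsum_nat_add_neg_add_one SH]
  refine tsum_nonneg fun n => ?_
  have e1 : H n = (f n - f (n + 1)) * g (k - n) := rfl
  have e2 : H (-(n + 1)) = (f (n + 1) - f n) * g (k + n + 1) := by
    have a1 : f (-((n : ℤ) + 1)) = f ((n : ℤ) + 1) := hfsym _
    have a2 : f (-((n : ℤ) + 1) + 1) = f n := by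
      rw [show -((n : ℤ) + 1) + 1 = -(n : ℤ) by ring, hfsym]
    have a3 : k - -((n : ℤ) + 1) = k + n + 1 := by ring
    simp only [hH, a1, a2, a3]
  rw [e1, e2]
  have : (f n - f (n + 1)) * g (k - n) + (f (n + 1) - f n) * g (k + n + 1)
      = (f n - f (n + 1)) * (g (k - n) - g (k + n + 1)) := by ring
  rw [this]
  exact mul_nonneg (sub_nonneg.mpr (hfu n (Int.natCast_nonneg n)))
    (sub_nonneg.mpr (su_key hgsym hgu hk (Int.natCast_nonneg n)))

lemma fiber_union {Ω : Type*} [MeasurableSpace Ω] (μ : Measure Ω) {Y : Ω → ℤ}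
    (hY : Measurable Y) : ∑' m : ℤ, μ {ω | Y ω = m} = μ Set.univ := by
  have hd : Pairwise (Function.onFun Disjoint fun m : ℤ => {ω | Y ω = m}) := by
    intro a b hab
    rw [Function.onFun, Set.disjoint_left]
    intro ω h1 h2
    exact hab ((h1 : Y ω = a) ▸ (h2 : Y ω = b))
  have h := measure_iUnion (μ := μ) hd (fun m => hY (measurableSet_singleton m))
  rw [← h]
  congr
  ext ω
  simp

lemma conv_measure {Ω : Type*} [MeasurableSpace Ω] (μ : Measure Ω) {Y T : Ω → ℤ}
    (hY : Measurable Y) (hT : Measurable T) (hInd : IndepFun Y T μ) (k : ℤ) :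
    μ {ω | Y ω + T ω = k} = ∑' m : ℤ, μ {ω | Y ω = m} * μ {ω | T ω = k - m} := by
  have hset : {ω | Y ω + T ω = k} = ⋃ m : ℤ, ({ω | Y ω = m} ∩ {ω | T ω = k - m}) := by
    ext ω
    simp only [Set.mem_setOf_eq, Set.mem_iUnion, Set.mem_inter_iff]
    constructor
    · intro h
      exact ⟨Y ω, rfl, by omega⟩
    · rintro ⟨m, h1, h2⟩
      omega
  have hd : Pairwise (Function.onFun Disjoint fun m : ℤ => {ω | Y ω = m} ∩ {ω | T ω = k - m}) := by
    intro a b hab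
    rw [Function.onFun, Set.disjoint_left]
    rintro ω ⟨h1, _⟩ ⟨h2, _⟩
    exact hab ((h1 : Y ω = a) ▸ (h2 : Y ω = b))
  have h := measure_iUnion (μ := μ) hd
    (fun m => ((hY (measurableSet_singleton m)).inter (hT (measurableSet_singleton (k - m)))))
  rw [hset, h]
  refine tsum_congr fun m => ?_
  exact hInd.measure_inter_preimage_eq_mul {m} {k - m}
    (measurableSet_singleton _) (measurableSet_singleton _)

theorem stmt5 {Ω : Type*} [MeasurableSpace Ω] (μ : Measure Ω) [IsProbabilityMeasure μ]
    (n : ℕ) (X : Fin n → Ω → ℤ) (hmeas : ∀ i, Measurable (X i))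
    (hindep : iIndepFun X μ)
    (p : ℤ → ℝ) (hlaw : ∀ i k, (μ {ω | X i ω = k}).toReal = p k)
    (hsymm : ∀ k : ℤ, p k = p (-k))
    (hunim : ∀ k : ℤ, 0 ≤ k → p (k + 1) ≤ p k) :
    (∀ k : ℤ, μ {ω | ∑ i, X i ω = k} = μ {ω | ∑ i, X i ω = -k}) ∧
    (∀ k : ℤ, 0 ≤ k → μ {ω | ∑ i, X i ω = k + 1} ≤ μ {ω | ∑ i, X i ω = k}) := by
  classical
  have hpsym : ∀ m : ℤ, p (-m) = p m := fun m => (hsymm m).symm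
  have main : ∀ s : Finset (Fin n),
      (∀ k : ℤ, μ {ω | ∑ i ∈ s, X i ω = k} = μ {ω | ∑ i ∈ s, X i ω = -k}) ∧
      (∀ k : ℤ, 0 ≤ k → μ {ω | ∑ i ∈ s, X i ω = k + 1} ≤ μ {ω | ∑ i ∈ s, X i ω = k}) := by
    intro s
    induction s using Finset.induction_on with
    | empty =>
      constructor
      · intro k
        rcases eq_or_ne k 0 with rfl | hk
        · norm_num
        · have h1 : {ω : Ω | ∑ i ∈ (∅ : Finset (Fin n)), X i ω = k} = ∅ := by
            ext ω; simp; omega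
          have h2 : {ω : Ω | ∑ i ∈ (∅ : Finset (Fin n)), X i ω = -k} = ∅ := by
            ext ω; simp; omega
          rw [h1, h2]
      · intro k hk
        have h1 : {ω : Ω | ∑ i ∈ (∅ : Finset (Fin n)), X i ω = k + 1} = ∅ := by
          ext ω; simp; omega
        rw [h1]
        simp
    | @insert i s hi IH =>
      have hTmeas : Measurable fun ω => ∑ j ∈ s, X j ω :=
        Finset.measurable_sum s (fun j _ => hmeas j)
      have hInd : IndepFun (X i) (fun ω => ∑ j ∈ s, X j ω) μ := by
        have h := (hindep.indepFun_finsetSum_of_notMem hmeas hi).symm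
        have hfun : (∑ j ∈ s, X j) = fun ω => ∑ j ∈ s, X j ω := by
          funext ω; simp [Finset.sum_apply]
        rwa [hfun] at h
      have hconv : ∀ c : ℤ, μ {ω | ∑ j ∈ insert i s, X j ω = c}
          = ∑' m : ℤ, μ {ω | X i ω = m} * μ {ω | ∑ j ∈ s, X j ω = c - m} := by
        intro c
        have hsetEq : {ω | ∑ j ∈ insert i s, X j ω = c}
            = {ω | X i ω + ∑ j ∈ s, X j ω = c} := by
          ext ω; simp [Finset.sum_insert hi]
        rw [hsetEq]
        exact conv_measure μ (hmeas i) hTmeas hInd c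
      set g : ℤ → ℝ := fun c => (μ {ω | ∑ j ∈ s, X j ω = c}).toReal with hgdef
      have hg0 : ∀ c, 0 ≤ g c := fun c => ENNReal.toReal_nonneg
      have hg1 : ∀ c, g c ≤ 1 := by
        intro c
        have h := ENNReal.toReal_mono (b := 1) (by simp)
          (prob_le_one (μ := μ) (s := {ω | ∑ j ∈ s, X j ω = c}))
        simpa using h
      have hgsym : ∀ c, g (-c) = g c := fun c => congrArg ENNReal.toReal (IH.1 c).symm
      have hgu : ∀ c : ℤ, 0 ≤ c → g (c + 1) ≤ g c := fun c hc =>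
        ENNReal.toReal_mono (measure_ne_top _ _) (IH.2 c hc)
      have hp0 : ∀ m, 0 ≤ p m := fun m => (hlaw i m) ▸ ENNReal.toReal_nonneg
      have hpsum : Summable p := by
        have h1 : Summable fun m => (μ {ω | X i ω = m}).toReal :=
          ENNReal.summable_toReal (by rw [fiber_union μ (hmeas i)]; exact measure_ne_top μ _)
        exact h1.congr (hlaw i)
      have hreal : ∀ c : ℤ, (μ {ω | ∑ j ∈ insert i s, X j ω = c}).toReal
          = ∑' m, p m * g (c - m) := by
        intro c
        rw [hconv c, ENNReal.tsum_toReal_eq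
          (fun m => ENNReal.mul_ne_top (measure_ne_top μ _) (measure_ne_top μ _))]
        exact tsum_congr fun m => by rw [ENNReal.toReal_mul, hlaw i m]
      constructor
      · intro k
        have h1 : (μ {ω | ∑ j ∈ insert i s, X j ω = k}).toReal
            = (μ {ω | ∑ j ∈ insert i s, X j ω = -k}).toReal := by
          rw [hreal k, hreal (-k)]
          exact (conv_symm hpsym hgsym k).symm
        exact ((ENNReal.toReal_eq_toReal_iff' (measure_ne_top _ _) (measure_ne_top _ _)).mp h1)
      · intro k hk
        have h1 : (μ {ω | ∑ j ∈ insert i s, X j ω = k + 1}).toReal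
            ≤ (μ {ω | ∑ j ∈ insert i s, X j ω = k}).toReal := by
          rw [hreal (k + 1), hreal k]
          exact conv_mono hp0 hg0 hg1 hpsum hpsym hgsym hunim hgu k hk
        exact (ENNReal.toReal_le_toReal (measure_ne_top _ _) (measure_ne_top _ _)).mp h1
  exact main Finset.univ
end

section
/- Let X₁, X₂, ... be i.i.d. integer-valued random variables satisfying P(|X₁| > x) ≥ C(log log x)^α / log x for all large x, for some α > 1 and C > 0. Then for every K > 1, almost surely, max(|X₁|,...,|X_n|) > K^n for all sufficiently large n. -/
open MeasureTheory ProbabilityTheory Filter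

set_option maxHeartbeats 1000000 in
theorem stmt8 {Ω : Type*} [MeasurableSpace Ω] (μ : Measure Ω) [IsProbabilityMeasure μ]
    (X : ℕ → Ω → ℤ) (hmeas : ∀ i, Measurable (X i))
    (hindep : iIndepFun X μ)
    (hid : ∀ i, IdentDistrib (X i) (X 0) μ μ)
    (α C : ℝ) (hα : 1 < α) (hC : 0 < C)
    (htail : ∃ x₀ : ℝ, ∀ x ≥ x₀,
      C * (Real.log (Real.log x))^α / Real.log x ≤ (μ {ω | x < |(X 0 ω : ℝ)|}).toReal) :
    ∀ K : ℝ, 1 < K →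
      ∀ᵐ ω ∂μ, ∀ᶠ n in atTop, ∃ i < n, K^n < |(X i ω : ℝ)| := by
  obtain ⟨x₀, hx₀⟩ := htail
  intro K hK
  have hK0 : (0:ℝ) < K := by linarith
  have hlogK : 0 < Real.log K := Real.log_pos hK
  set S : ℕ → Set ℤ := fun n => {k : ℤ | |(k:ℝ)| ≤ K ^ n} with hS
  set E : ℕ → Set Ω := fun n => ⋂ i ∈ Finset.range n, X i ⁻¹' S n with hE
  set p : ℕ → ℝ := fun n => (μ {ω | K ^ n < |(X 0 ω : ℝ)|}).toReal with hp
  set q : ℕ → ℝ := fun n => (μ (X 0 ⁻¹' S n)).toReal with hq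
  -- measure of E n
  have hEmeas : ∀ n, μ (E n) = (μ (X 0 ⁻¹' S n)) ^ n := by
    intro n
    rw [hE]
    rw [hindep.meas_biInter (fun i _ => ⟨S n, (Set.to_countable _).measurableSet, rfl⟩)]
    rw [Finset.prod_congr rfl (fun i _ => (hid i).measure_mem_eq (Set.to_countable _).measurableSet)]
    simp
  -- q n + p n = 1
  have hqp : ∀ n, q n + p n = 1 := by
    intro n
    have hms : MeasurableSet (X 0 ⁻¹' S n) :=
      (hmeas 0) ((Set.to_countable _).measurableSet)
    have hcompl : (X 0 ⁻¹' S n)ᶜ = {ω | K ^ n < |(X 0 ω : ℝ)|} := by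
      ext ω; simp [hS, not_le]
    have h1 : μ (X 0 ⁻¹' S n) + μ ((X 0 ⁻¹' S n)ᶜ) = 1 := by
      rw [measure_add_measure_compl hms, measure_univ]
    have h2 := congrArg ENNReal.toReal h1
    rw [ENNReal.toReal_add (measure_ne_top _ _) (measure_ne_top _ _)] at h2
    show (μ (X 0 ⁻¹' S n)).toReal + (μ {ω | K ^ n < |((X 0 ω : ℤ) : ℝ)|}).toReal = 1
    rw [← hcompl]
    simpa using h2
  have hq0 : ∀ n, 0 ≤ q n := fun n => ENNReal.toReal_nonneg
  have hp0 : ∀ n, 0 ≤ p n := fun n => ENNReal.toReal_nonneg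
  -- the main eventual bound
  have hev : ∀ᶠ n : ℕ in atTop, μ (E n) ≤ ENNReal.ofReal (1 / (n:ℝ)^2) := by
    have h1 : ∀ᶠ n : ℕ in atTop, x₀ ≤ K ^ n :=
      (tendsto_pow_atTop_atTop_of_one_lt hK).eventually_ge_atTop x₀
    have hlogn : Tendsto (fun n : ℕ => Real.log n) atTop atTop :=
      Real.tendsto_log_atTop.comp tendsto_natCast_atTop_atTop
    have h2 : ∀ᶠ n : ℕ in atTop, -Real.log (Real.log K) ≤ (1/2) * Real.log n := by
      filter_upwards [hlogn.eventually_ge_atTop (2 * (-Real.log (Real.log K)))] with n hn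
      linarith
    have h3 : ∀ᶠ n : ℕ in atTop, (1:ℝ) ≤ Real.log n := hlogn.eventually_ge_atTop 1
    have h4 : ∀ᶠ n : ℕ in atTop,
        2 * Real.log K * 2 ^ α / C ≤ Real.log n ^ (α - 1) := by
      have : Tendsto (fun n : ℕ => Real.log n ^ (α - 1)) atTop atTop :=
        (tendsto_rpow_atTop (by linarith : (0:ℝ) < α - 1)).comp hlogn
      exact this.eventually_ge_atTop _
    filter_upwards [h1, h2, h3, h4, eventually_ge_atTop 1] with n hn1 hn2 hn3 hn4 hn5
    have hn0 : (0:ℝ) < n := by exact_mod_cast hn5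
    have hlogn0 : (0:ℝ) < Real.log n := by linarith
    -- tail bound at x = K^n
    have htb := hx₀ (K ^ n) hn1
    rw [Real.log_pow] at htb
    -- lower bound on n * p n
    have hL : (1/2) * Real.log n ≤ Real.log ((n:ℝ) * Real.log K) := by
      rw [Real.log_mul (ne_of_gt hn0) (ne_of_gt hlogK)]
      linarith
    have hLpow : ((1:ℝ)/2) ^ α * Real.log n ^ α ≤ Real.log ((n:ℝ) * Real.log K) ^ α := by
      rw [← Real.mul_rpow (by norm_num) hlogn0.le]
      exact Real.rpow_le_rpow (by positivity) hL (by linarith)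
    have hnp : 2 * Real.log n ≤ n * p n := by
      have hnlogK : (0:ℝ) < n * Real.log K := by positivity
      have key : 2 * Real.log n * (n * Real.log K) ≤
          n * (C * Real.log ((n:ℝ) * Real.log K) ^ α) := by
        have e1 : Real.log n ^ α = Real.log n ^ (α - 1) * Real.log n := by
          rw [← Real.rpow_add_one (ne_of_gt hlogn0)]; ring_nf
        have e2 : ((1:ℝ)/2) ^ α = (2 ^ α)⁻¹ := by
          rw [one_div, Real.inv_rpow (by norm_num)]
        have h2α : (0:ℝ) < 2 ^ α := Real.rpow_pos_of_pos (by norm_num) α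
        have step : 2 * Real.log K * Real.log n ≤
            C * (((1:ℝ)/2) ^ α * Real.log n ^ α) := by
          rw [e1, e2]
          have := mul_le_mul_of_nonneg_right hn4 hlogn0.le
          calc 2 * Real.log K * Real.log n
              = (2 * Real.log K * 2 ^ α / C) * Real.log n * (C / 2 ^ α) := by
                field_simp
            _ ≤ Real.log n ^ (α - 1) * Real.log n * (C / 2 ^ α) := by
                apply mul_le_mul_of_nonneg_right _ (by positivity)
                exact this
            _ = C * ((2 ^ α)⁻¹ * (Real.log n ^ (α - 1) * Real.log n)) := by
                field_simp
        have step2 : C * (((1:ℝ)/2) ^ α * Real.log n ^ α) ≤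
            C * Real.log ((n:ℝ) * Real.log K) ^ α :=
          mul_le_mul_of_nonneg_left hLpow hC.le
        calc 2 * Real.log n * (n * Real.log K)
            = n * (2 * Real.log K * Real.log n) := by ring
          _ ≤ n * (C * (((1:ℝ)/2) ^ α * Real.log n ^ α)) := by
              exact mul_le_mul_of_nonneg_left step hn0.le
          _ ≤ n * (C * Real.log ((n:ℝ) * Real.log K) ^ α) :=
              mul_le_mul_of_nonneg_left step2 hn0.le
      have : 2 * Real.log n ≤ n * (C * Real.log ((n:ℝ) * Real.log K) ^ α / (n * Real.log K)) := by
        have h' : 2 * Real.log n ≤ n * (C * Real.log ((n:ℝ) * Real.log K) ^ α) / (n * Real.log K) :=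
          (le_div_iff₀ hnlogK).mpr key
        rwa [mul_div_assoc] at h'
      calc 2 * Real.log n
          ≤ n * (C * Real.log ((n:ℝ) * Real.log K) ^ α / (n * Real.log K)) := this
        _ ≤ n * p n := by
            apply mul_le_mul_of_nonneg_left _ hn0.le
            calc C * Real.log ((n:ℝ) * Real.log K) ^ α / (n * Real.log K)
                = C * Real.log ((n:ℝ) * Real.log K) ^ α / (n * Real.log K) := rfl
              _ ≤ p n := htb
    -- now μ (E n) ≤ ofReal (1/n^2)
    have hEn_toReal : (μ (E n)).toReal = q n ^ n := by
      rw [hEmeas n, ENNReal.toReal_pow, hq]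
    have hq_le : q n ≤ Real.exp (-(p n)) := by
      have := Real.add_one_le_exp (-(p n))
      have hqn := hqp n
      linarith
    have hbound : (μ (E n)).toReal ≤ 1 / (n:ℝ)^2 := by
      rw [hEn_toReal]
      calc q n ^ n ≤ Real.exp (-(p n)) ^ n := pow_le_pow_left₀ (hq0 n) hq_le n
        _ = Real.exp (n * -(p n)) := (Real.exp_nat_mul _ n).symm
        _ ≤ Real.exp (-(2 * Real.log n)) := by
            apply Real.exp_le_exp.mpr
            have : n * p n = -(n * -(p n)) := by ring
            linarith [hnp]
        _ = 1 / (n:ℝ)^2 := by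
            rw [Real.exp_neg, one_div]
            congr 1
            rw [show (2:ℝ) * Real.log n = ((2:ℕ):ℝ) * Real.log n by norm_num,
              Real.exp_nat_mul, Real.exp_log hn0]
    calc μ (E n) = ENNReal.ofReal ((μ (E n)).toReal) :=
          (ENNReal.ofReal_toReal (measure_ne_top _ _)).symm
      _ ≤ ENNReal.ofReal (1 / (n:ℝ)^2) := ENNReal.ofReal_le_ofReal hbound
  -- summability
  clear_value S E p q
  obtain ⟨N, hN⟩ := eventually_atTop.mp hev
  have hsum : ∑' n, μ (E (n + N)) ≠ ⊤ := by
    have hsummable : Summable (fun n : ℕ => 1 / ((n + N : ℕ):ℝ)^2) := by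
      have h5 : Summable (fun n : ℕ => 1 / (n:ℝ)^2) :=
        Real.summable_one_div_nat_pow.mpr one_lt_two
      exact (summable_nat_add_iff N).mpr h5
    have hle : ∑' n : ℕ, μ (E (n + N)) ≤
        ∑' n : ℕ, ENNReal.ofReal (1 / ((n + N : ℕ):ℝ)^2) :=
      ENNReal.tsum_le_tsum fun n => hN (n + N) (Nat.le_add_left N n)
    have hfin : ∑' n : ℕ, ENNReal.ofReal (1 / ((n + N : ℕ):ℝ)^2) ≠ ⊤ := by
      rw [← ENNReal.ofReal_tsum_of_nonneg (fun n => by positivity) hsummable]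
      exact ENNReal.ofReal_ne_top
    exact (lt_of_le_of_lt hle hfin.lt_top).ne
  -- Borel-Cantelli
  filter_upwards [ae_eventually_notMem hsum] with ω hω
  obtain ⟨a, ha⟩ := eventually_atTop.mp hω
  rw [eventually_atTop]
  refine ⟨a + N, fun m hm => ?_⟩
  have hm' : m - N + N = m := Nat.sub_add_cancel (by omega)
  have hn := ha (m - N) (by omega)
  rw [hm'] at hn
  rw [hE] at hn
  simp only [Set.mem_iInter, Finset.mem_range, Set.mem_preimage, hS, Set.mem_setOf_eq,
    not_forall, not_le] at hn
  obtain ⟨i, hi, hlt⟩ := hn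
  exact ⟨i, hi, hlt⟩
end

section
/- Let ω be a real random variable with E[e^{βω}] < ∞ for all β > 0 and s = ess sup ω < ∞. With λ(β) = log E[e^{βω}], one has βs - λ(β) → -log P(ω = s) as β → ∞ (with the convention -log 0 = +∞). -/
open MeasureTheory Filter

theorem stmt13 {Ω : Type*} [MeasurableSpace Ω] (μ : Measure Ω) [IsProbabilityMeasure μ]
    (X : Ω → ℝ) (hmeas : Measurable X)
    (hint : ∀ β > (0:ℝ), Integrable (fun x => Real.exp (β * X x)) μ)
    (s : ℝ) (hle : ∀ᵐ x ∂μ, X x ≤ s) (hs : ∀ s' < s, 0 < μ {x | s' < X x}) :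
    (μ {x | X x = s} = 0 →
      Tendsto (fun β : ℝ => β * s - Real.log (∫ y, Real.exp (β * X y) ∂μ)) atTop atTop) ∧
    (0 < μ {x | X x = s} →
      Tendsto (fun β : ℝ => β * s - Real.log (∫ y, Real.exp (β * X y) ∂μ)) atTop
        (nhds (-Real.log (μ {x | X x = s}).toReal))) := by
  set S : Set Ω := {x | X x = s} with hSdef
  have hSmeas : MeasurableSet S := hmeas (measurableSet_singleton s)
  set J : ℝ → ℝ := fun β => ∫ y, Real.exp (β * (X y - s)) ∂μ with hJdef
  have hJint : ∀ β > (0:ℝ), Integrable (fun x => Real.exp (β * (X x - s))) μ := by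
    intro β hβ
    have h := (hint β hβ).div_const (Real.exp (β * s))
    have heq : (fun x => Real.exp (β * X x) / Real.exp (β * s))
        = fun x => Real.exp (β * (X x - s)) := by
      funext x
      rw [← Real.exp_sub]
      ring_nf
    rwa [heq] at h
  have hJpos : ∀ β > (0:ℝ), 0 < J β := by
    intro β hβ
    rw [hJdef]
    rw [integral_pos_iff_support_of_nonneg (fun x => (Real.exp_pos _).le) (hJint β hβ)]
    have : Function.support (fun x => Real.exp (β * (X x - s))) = Set.univ := by
      ext x; simp [Function.support, (Real.exp_pos _).ne']
    rw [this]
    simp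
  -- dominated convergence
  have hJtend : Tendsto J atTop (nhds (μ S).toReal) := by
    have hlim : ∫ y, S.indicator (fun _ => (1:ℝ)) y ∂μ = (μ S).toReal := by
      rw [integral_indicator_const _ hSmeas]; simp; rfl
    rw [← hlim]
    apply tendsto_integral_filter_of_dominated_convergence (fun _ => (1:ℝ))
    · filter_upwards with β
      exact (Real.measurable_exp.comp ((hmeas.sub_const s).const_mul β)).aestronglyMeasurable
    · filter_upwards [eventually_ge_atTop (0:ℝ)] with β hβ
      filter_upwards [hle] with x hx
      rw [Real.norm_eq_abs, abs_of_pos (Real.exp_pos _)]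
      exact Real.exp_le_one_iff.mpr (mul_nonpos_of_nonneg_of_nonpos hβ (sub_nonpos.mpr hx))
    · exact integrable_const 1
    · filter_upwards [hle] with x hx
      rcases eq_or_lt_of_le hx with heq | hlt
      · have : x ∈ S := heq
        simp only [Set.indicator_of_mem this, heq]
        simp
      · have hxS : x ∉ S := by simp [hSdef, hlt.ne]
        simp only [Set.indicator_of_notMem hxS]
        have h1 : Tendsto (fun β : ℝ => β * (X x - s)) atTop atBot :=
          tendsto_id.atTop_mul_const_of_neg (sub_neg.mpr hlt)
        exact Real.tendsto_exp_atBot.comp h1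
  have hEq : ∀ᶠ β in atTop, β * s - Real.log (∫ y, Real.exp (β * X y) ∂μ)
      = -Real.log (J β) := by
    filter_upwards [eventually_gt_atTop (0:ℝ)] with β hβ
    have hI : ∫ y, Real.exp (β * X y) ∂μ = Real.exp (β * s) * J β := by
      rw [hJdef, ← integral_const_mul]
      congr 1
      funext y
      rw [← Real.exp_add]
      ring_nf
    rw [hI, Real.log_mul (Real.exp_ne_zero _) (hJpos β hβ).ne', Real.log_exp]
    ring
  constructor
  · intro h0
    rw [h0] at hJtend
    simp only [ENNReal.toReal_zero] at hJtend
    have hJ0 : Tendsto J atTop (nhdsWithin 0 (Set.Ioi 0)) := by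
      rw [tendsto_nhdsWithin_iff]
      refine ⟨hJtend, ?_⟩
      filter_upwards [eventually_gt_atTop (0:ℝ)] with β hβ
      exact hJpos β hβ
    have hlog : Tendsto (fun β => Real.log (J β)) atTop atBot :=
      Real.tendsto_log_nhdsGT_zero.comp hJ0
    apply Tendsto.congr' (hEq.mono fun β h => h.symm)
    exact tendsto_neg_atBot_atTop.comp hlog
  · intro hpos
    have hm : 0 < (μ S).toReal :=
      ENNReal.toReal_pos hpos.ne' (measure_ne_top μ S)
    apply Tendsto.congr' (hEq.mono fun β h => h.symm)
    exact ((Real.continuousAt_log hm.ne').tendsto.comp hJtend).neg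
end

section
/- Let ω be a real random variable with E[e^{βω}] < ∞ for all β > 0 and s = ess sup ω < ∞. With λ(β) = log E[e^{βω}], one has βλ'(β) - λ(β) → -log P(ω = s) as β → ∞. -/
open MeasureTheory Filter Metric Real

lemma pmel {u : ℝ} (hu : 0 ≤ u) {k : ℕ} (hk : k ≤ 2) : u ^ k * Real.exp (-u) ≤ 4 := by
  have e1 : u/2 + 1 ≤ Real.exp (u/2) := Real.add_one_le_exp _
  have e2 : Real.exp (-(u/2)) * Real.exp (u/2) = 1 := by
    rw [← Real.exp_add]; simp
  have e3 : Real.exp (-u) = Real.exp (-(u/2)) ^ 2 := by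
    rw [← Real.exp_nat_mul]; congr 1; push_cast; ring
  have p1 : (0:ℝ) < Real.exp (-(u/2)) := Real.exp_pos _
  have p2 : (0:ℝ) < Real.exp (u/2) := Real.exp_pos _
  interval_cases k
  · simpa using (Real.exp_le_one_iff.2 (by linarith) : Real.exp (-u) ≤ 1).trans (by norm_num)
  · rw [e3]; nlinarith
  · have h4 : u * Real.exp (-(u/2)) ≤ 2 := by nlinarith
    have h5 : 0 ≤ u * Real.exp (-(u/2)) := by positivity
    rw [e3]; nlinarith

lemma bnd {t a β : ℝ} (ht : t ≤ 0) (ha : 0 < a) (hβ : a ≤ β) {k : ℕ} (hk : k ≤ 2) :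
    |t| ^ k * Real.exp (β * t) ≤ 4 / a ^ k := by
  have h1 : Real.exp (β * t) ≤ Real.exp (a * t) :=
    Real.exp_le_exp.2 (by nlinarith)
  have h2 : |t| ^ k * Real.exp (β * t) ≤ |t| ^ k * Real.exp (a * t) := by
    apply mul_le_mul_of_nonneg_left h1 (by positivity)
  refine h2.trans ?_
  have hu : 0 ≤ a * (-t) := by nlinarith
  have := pmel hu hk
  have ht' : |t| = -t := abs_of_nonpos ht
  have hat : a * t = -(a * (-t)) := by ring
  rw [ht', hat]
  rw [mul_pow] at this
  rw [div_eq_mul_inv, ← mul_le_mul_iff_right₀ (by positivity : (0:ℝ) < a ^ k)]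
  calc a ^ k * ((-t) ^ k * Real.exp (-(a * -t))) = a ^ k * (-t) ^ k * Real.exp (-(a * -t)) := by ring
    _ ≤ 4 := this
    _ = a ^ k * (4 * (a ^ k)⁻¹) := by field_simp

section Aux
variable {Ω : Type*} [MeasurableSpace Ω] {μ : Measure Ω} [IsProbabilityMeasure μ]
  {Y : Ω → ℝ}

lemma meas_aux (hY : Measurable Y) (k : ℕ) (β : ℝ) :
    AEStronglyMeasurable (fun x => Y x ^ k * Real.exp (β * Y x)) μ :=
  ((hY.pow_const k).mul ((measurable_const.mul hY).exp)).aestronglyMeasurable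

lemma int_aux (hY : Measurable Y) (hY0 : ∀ᵐ x ∂μ, Y x ≤ 0) {k : ℕ} (hk : k ≤ 2) {β : ℝ} (hβ : 0 < β) :
    Integrable (fun x => Y x ^ k * Real.exp (β * Y x)) μ := by
  refine Integrable.mono' (integrable_const (4 / β ^ k)) (meas_aux hY k β) ?_
  filter_upwards [hY0] with x hx
  have : |Y x ^ k * Real.exp (β * Y x)| = |Y x| ^ k * Real.exp (β * Y x) := by
    rw [abs_mul, abs_pow, abs_of_pos (Real.exp_pos _)]
  rw [Real.norm_eq_abs, this]
  exact bnd hx hβ le_rfl hk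

lemma hasDerivAt_aux (hY : Measurable Y) (hY0 : ∀ᵐ x ∂μ, Y x ≤ 0) {k : ℕ} (hk : k ≤ 1) {β : ℝ} (hβ : 0 < β) :
    HasDerivAt (fun b => ∫ x, Y x ^ k * Real.exp (b * Y x) ∂μ)
      (∫ x, Y x ^ (k + 1) * Real.exp (β * Y x) ∂μ) β := by
  have h2 : 0 < β / 2 := by linarith
  have key := hasDerivAt_integral_of_dominated_loc_of_deriv_le (μ := μ)
    (F := fun b x => Y x ^ k * Real.exp (b * Y x))
    (F' := fun b x => Y x ^ (k + 1) * Real.exp (b * Y x))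
    (bound := fun _ => 4 / (β / 2) ^ (k + 1)) (Metric.ball_mem_nhds β h2)
    (Filter.Eventually.of_forall fun b => meas_aux hY k b)
    (int_aux hY hY0 (by omega) hβ) (meas_aux hY (k + 1) β) ?_ (integrable_const _) ?_
  · exact key.2
  · filter_upwards [hY0] with x hx b hb
    have hb2 : β / 2 ≤ b := by
      rw [Metric.mem_ball, Real.dist_eq, abs_lt] at hb; linarith
    have : |Y x ^ (k+1) * Real.exp (b * Y x)| = |Y x| ^ (k+1) * Real.exp (b * Y x) := by
      rw [abs_mul, abs_pow, abs_of_pos (Real.exp_pos _)]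
    rw [Real.norm_eq_abs, this]
    exact bnd hx h2 hb2 (by omega)
  · filter_upwards with x b _
    have h1 : HasDerivAt (fun b : ℝ => b * Y x) (Y x) b := hasDerivAt_mul_const _
    have h2 := (h1.exp).const_mul (Y x ^ k)
    refine h2.congr_deriv ?_
    rw [pow_succ]; ring

end Aux

section T
variable {Ω : Type*} [MeasurableSpace Ω] {μ : Measure Ω} [IsProbabilityMeasure μ] {Y : Ω → ℝ}

lemma tendsto_N (hY : Measurable Y) (hY0 : ∀ᵐ x ∂μ, Y x ≤ 0) :
    Tendsto (fun β : ℝ => ∫ x, Real.exp (β * Y x) ∂μ) atTop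
      (nhds ((μ {x | Y x = 0}).toReal)) := by
  have hms : MeasurableSet {x | Y x = 0} := hY (measurableSet_singleton 0)
  have : (μ {x | Y x = 0}).toReal = ∫ x, Set.indicator {x | Y x = 0} (1 : Ω → ℝ) x ∂μ := by
    rw [integral_indicator_one hms]; rfl
  rw [this]
  apply tendsto_integral_filter_of_dominated_convergence (fun _ => (1:ℝ))
  · filter_upwards with β
    exact ((measurable_const.mul hY).exp).aestronglyMeasurable
  · filter_upwards [eventually_ge_atTop (0:ℝ)] with β hβ
    filter_upwards [hY0] with x hx
    rw [Real.norm_eq_abs, abs_of_pos (Real.exp_pos _)]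
    exact Real.exp_le_one_iff.2 (by nlinarith)
  · exact integrable_const 1
  · filter_upwards [hY0] with x hx
    rcases eq_or_lt_of_le hx with h | h
    · have hx0 : x ∈ {x | Y x = 0} := h
      simp only [Set.indicator_of_mem hx0, Pi.one_apply, h, mul_zero, Real.exp_zero]
      exact tendsto_const_nhds
    · have h0 : x ∉ {x | Y x = 0} := by simp [Set.mem_setOf_eq, ne_of_lt h]
      simp only [Set.indicator_of_notMem h0]
      have : Tendsto (fun β : ℝ => β * Y x) atTop atBot :=
        Tendsto.atTop_mul_const_of_neg h tendsto_id
      exact Real.tendsto_exp_atBot.comp this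

lemma tendsto_K (hY : Measurable Y) (hY0 : ∀ᵐ x ∂μ, Y x ≤ 0) :
    Tendsto (fun β : ℝ => ∫ x, (β * Y x) * Real.exp (β * Y x) ∂μ) atTop (nhds 0) := by
  have h0 : (0:ℝ) = ∫ _ : Ω, (0:ℝ) ∂μ := by simp
  rw [h0]
  apply tendsto_integral_filter_of_dominated_convergence (fun _ => (4:ℝ))
  · filter_upwards with β
    exact ((measurable_const.mul hY).mul ((measurable_const.mul hY).exp)).aestronglyMeasurable
  · filter_upwards [eventually_ge_atTop (0:ℝ)] with β hβ
    filter_upwards [hY0] with x hx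
    have ht : β * Y x ≤ 0 := mul_nonpos_of_nonneg_of_nonpos hβ hx
    rw [Real.norm_eq_abs, abs_mul, abs_of_pos (Real.exp_pos _)]
    have hb := bnd (β := 1) (a := 1) (k := 1) ht one_pos le_rfl one_le_two
    calc |β * Y x| * Real.exp (β * Y x) ≤ |β * Y x| * Real.exp (1 * (β * Y x)) := by
          apply mul_le_mul_of_nonneg_left (Real.exp_le_exp.2 (by nlinarith)) (abs_nonneg _)
      _ ≤ 4 := by simpa using hb
      _ ≤ 4 := le_rfl
  · exact integrable_const 4
  · filter_upwards [hY0] with x hx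
    rcases eq_or_lt_of_le hx with h | h
    · simpa [h] using tendsto_const_nhds
    · have h1 : Tendsto (fun β : ℝ => β * Y x) atTop atBot :=
        Tendsto.atTop_mul_const_of_neg h tendsto_id
      have h2 : Tendsto (fun u : ℝ => u * Real.exp u) atBot (nhds 0) := by
        have h3 : Tendsto (fun v : ℝ => -(v ^ 1 * Real.exp (-v))) atTop (nhds 0) := by
          simpa using (tendsto_pow_mul_exp_neg_atTop_nhds_zero 1).neg
        have h4 := h3.comp tendsto_neg_atBot_atTop
        refine h4.congr fun u => ?_
        simp
      exact h2.comp h1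

end T

theorem stmt14 {Ω : Type*} [MeasurableSpace Ω] (μ : Measure Ω) [IsProbabilityMeasure μ]
    (X : Ω → ℝ) (hmeas : Measurable X)
    (hint : ∀ β > (0:ℝ), Integrable (fun x => Real.exp (β * X x)) μ)
    (s : ℝ) (hle : ∀ᵐ x ∂μ, X x ≤ s) (hs : ∀ s' < s, 0 < μ {x | s' < X x})
    (lam : ℝ → ℝ) (hlam : lam = fun β => Real.log (∫ y, Real.exp (β * X y) ∂μ)) :
    (μ {x | X x = s} = 0 →
      Tendsto (fun β : ℝ => β * deriv lam β - lam β) atTop atTop) ∧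
    (0 < μ {x | X x = s} →
      Tendsto (fun β : ℝ => β * deriv lam β - lam β) atTop
        (nhds (-Real.log (μ {x | X x = s}).toReal))) := by
  haveI : NeZero μ := ⟨IsProbabilityMeasure.ne_zero μ⟩
  set Y : Ω → ℝ := fun x => X x - s with hYdef
  have hY : Measurable Y := hmeas.sub measurable_const
  have hY0 : ∀ᵐ x ∂μ, Y x ≤ 0 := by filter_upwards [hle] with x hx; simpa [hYdef] using hx
  set N : ℝ → ℝ := fun β => ∫ x, Real.exp (β * Y x) ∂μ with hNdef
  set N₁ : ℝ → ℝ := fun β => ∫ x, Y x * Real.exp (β * Y x) ∂μ with hN1def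
  set N₂ : ℝ → ℝ := fun β => ∫ x, Y x ^ 2 * Real.exp (β * Y x) ∂μ with hN2def
  have iN : ∀ β : ℝ, 0 < β → Integrable (fun x => Real.exp (β * Y x)) μ := fun β hβ => by
    simpa using int_aux hY hY0 (k := 0) (by norm_num) hβ
  have iN1 : ∀ β : ℝ, 0 < β → Integrable (fun x => Y x * Real.exp (β * Y x)) μ := fun β hβ => by
    simpa using int_aux hY hY0 (k := 1) (by norm_num) hβ
  have iN2 : ∀ β : ℝ, 0 < β → Integrable (fun x => Y x ^ 2 * Real.exp (β * Y x)) μ := fun β hβ =>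
    int_aux hY hY0 (k := 2) le_rfl hβ
  have hNpos : ∀ β : ℝ, 0 < β → 0 < N β := fun β hβ =>
    integral_exp_pos (f := fun x => β * Y x) (iN β hβ)
  have hN : ∀ β : ℝ, 0 < β → HasDerivAt N (N₁ β) β := fun β hβ => by
    have := hasDerivAt_aux hY hY0 (k := 0) (by norm_num) hβ
    simpa using this
  have hN1 : ∀ β : ℝ, 0 < β → HasDerivAt N₁ (N₂ β) β := fun β hβ => by
    have := hasDerivAt_aux hY hY0 (k := 1) le_rfl hβ
    simpa using this
  have hN1le : ∀ β : ℝ, 0 ≤ β → N₁ β ≤ 0 := fun β hβ => by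
    apply integral_nonpos_of_ae
    filter_upwards [hY0] with x hx
    exact mul_nonpos_of_nonpos_of_nonneg hx (Real.exp_pos _).le
  -- lam on the positive axis
  have hlamN : ∀ b : ℝ, 0 < b → lam b = b * s + Real.log (N b) := by
    intro b hb
    have h1 : (fun y => Real.exp (b * X y)) = fun y => Real.exp (b * s) * Real.exp (b * Y y) := by
      funext y; rw [← Real.exp_add]; congr 1; simp [hYdef]; ring
    rw [hlam]
    simp only [h1]
    rw [integral_const_mul, Real.log_mul (Real.exp_ne_zero _) (ne_of_gt (hNpos b hb)),
      Real.log_exp]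
  have hderiv : ∀ b : ℝ, 0 < b → deriv lam b = s + N₁ b / N b := by
    intro b hb
    have hg : HasDerivAt (fun u : ℝ => u * s + Real.log (N u)) (s + N₁ b / N b) b :=
      (hasDerivAt_mul_const s).add ((hN b hb).log (ne_of_gt (hNpos b hb)))
    have heq : lam =ᶠ[nhds b] fun u : ℝ => u * s + Real.log (N u) := by
      filter_upwards [isOpen_Ioi.mem_nhds (show b ∈ Set.Ioi (0:ℝ) from hb)] with u hu
      exact hlamN u hu
    rw [heq.deriv_eq, hg.deriv]
  set h : ℝ → ℝ := fun b => b * (N₁ b / N b) - Real.log (N b) with hhdef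
  have hfeq : ∀ᶠ b : ℝ in atTop, h b = b * deriv lam b - lam b := by
    filter_upwards [eventually_gt_atTop (0:ℝ)] with b hb
    rw [hderiv b hb, hlamN b hb, hhdef]; ring
  have hset : {x | Y x = 0} = {x | X x = s} := by
    ext x; simp [hYdef, sub_eq_zero]
  have tN : Tendsto N atTop (nhds ((μ {x | X x = s}).toReal)) := by
    have := tendsto_N hY hY0
    rwa [hset] at this
  have tK : Tendsto (fun β : ℝ => β * N₁ β) atTop (nhds 0) := by
    have := tendsto_K hY hY0
    refine this.congr fun β => ?_
    rw [hN1def]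
    simp only
    rw [← integral_const_mul]
    congr 1; funext x; ring
  constructor
  · -- divergent case
    intro hp
    rw [hp, ENNReal.toReal_zero] at tN
    apply Tendsto.congr' hfeq
    -- second derivative nonneg (Cauchy-Schwarz)
    have hCS : ∀ b : ℝ, 0 < b → 0 ≤ N₂ b * N b - N₁ b * N₁ b := by
      intro b hb
      set r : ℝ := N₁ b / N b with hrdef
      have key : 0 ≤ ∫ x, (Y x - r) ^ 2 * Real.exp (b * Y x) ∂μ :=
        integral_nonneg fun x => by positivity
      have expand : (fun x => (Y x - r) ^ 2 * Real.exp (b * Y x)) =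
          fun x => (Y x ^ 2 * Real.exp (b * Y x) - (2 * r) * (Y x * Real.exp (b * Y x)))
            + r ^ 2 * Real.exp (b * Y x) := by
        funext x; ring
      have i1 : Integrable (fun x => Y x ^ 2 * Real.exp (b * Y x)
          - (2 * r) * (Y x * Real.exp (b * Y x))) μ :=
        (iN2 b hb).sub ((iN1 b hb).const_mul _)
      have i2 : Integrable (fun x => r ^ 2 * Real.exp (b * Y x)) μ := (iN b hb).const_mul _
      rw [expand, integral_add i1 i2, integral_sub (iN2 b hb) ((iN1 b hb).const_mul _),
        integral_const_mul, integral_const_mul] at key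
      have hNb := hNpos b hb
      have key2 : 0 ≤ (N₂ b * N b - N₁ b * N₁ b) / N b := by
        have e : N₂ b - 2 * r * N₁ b + r ^ 2 * N b = (N₂ b * N b - N₁ b * N₁ b) / N b := by
          rw [hrdef]; field_simp; ring
        linarith [key, e.symm.le, e.le]
      calc (0:ℝ) = 0 * N b := by ring
        _ ≤ ((N₂ b * N b - N₁ b * N₁ b) / N b) * N b := by
            apply mul_le_mul_of_nonneg_right key2 hNb.le
        _ = N₂ b * N b - N₁ b * N₁ b := by field_simp
    have hh : ∀ b : ℝ, 0 < b →
        HasDerivAt h (b * ((N₂ b * N b - N₁ b * N₁ b) / (N b) ^ 2)) b := by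
      intro b hb
      have hQ : HasDerivAt (fun u => N₁ u / N u)
          ((N₂ b * N b - N₁ b * N₁ b) / (N b) ^ 2) b :=
        (hN1 b hb).div (hN b hb) (ne_of_gt (hNpos b hb))
      have h1 := (hasDerivAt_id b).mul hQ
      have h2 := h1.sub ((hN b hb).log (ne_of_gt (hNpos b hb)))
      refine h2.congr_deriv ?_
      simp only [id_eq]
      ring
    have hmono : MonotoneOn h (Set.Ici (1:ℝ)) := by
      apply monotoneOn_of_deriv_nonneg (convex_Ici 1)
      · intro b hb
        have hb0 : (0:ℝ) < b := lt_of_lt_of_le one_pos hb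
        exact ((hh b hb0).continuousAt).continuousWithinAt
      · intro b hb
        rw [interior_Ici] at hb
        have hb0 : (0:ℝ) < b := lt_trans one_pos hb
        exact ((hh b hb0).differentiableAt).differentiableWithinAt
      · intro b hb
        rw [interior_Ici] at hb
        have hb0 : (0:ℝ) < b := lt_trans one_pos hb
        rw [(hh b hb0).deriv]
        exact mul_nonneg hb0.le (div_nonneg (hCS b hb0) (sq_nonneg _))
    set φ : ℝ → ℝ := fun b => -Real.log (N b) with hφdef
    have hφ : ∀ b : ℝ, 0 < b → HasDerivAt φ (-(N₁ b / N b)) b := fun b hb =>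
      ((hN b hb).log (ne_of_gt (hNpos b hb))).neg
    have hφmono : MonotoneOn φ (Set.Ici (1:ℝ)) := by
      apply monotoneOn_of_deriv_nonneg (convex_Ici 1)
      · intro b hb
        have hb0 : (0:ℝ) < b := lt_of_lt_of_le one_pos hb
        exact ((hφ b hb0).continuousAt).continuousWithinAt
      · intro b hb
        rw [interior_Ici] at hb
        have hb0 : (0:ℝ) < b := lt_trans one_pos hb
        exact ((hφ b hb0).differentiableAt).differentiableWithinAt
      · intro b hb
        rw [interior_Ici] at hb
        have hb0 : (0:ℝ) < b := lt_trans one_pos hb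
        rw [(hφ b hb0).deriv]
        simp only [neg_div, neg_nonneg, Left.nonneg_neg_iff]
        exact div_nonpos_of_nonpos_of_nonneg (hN1le b hb0.le) (hNpos b hb0).le
    have tφ : Tendsto φ atTop atTop := by
      have hNin : Tendsto N atTop (nhdsWithin 0 (Set.Ioi 0)) := by
        rw [tendsto_nhdsWithin_iff]
        refine ⟨tN, ?_⟩
        filter_upwards [eventually_gt_atTop (0:ℝ)] with b hb
        exact hNpos b hb
      have tLog : Tendsto (fun b => Real.log (N b)) atTop atBot :=
        Real.tendsto_log_nhdsGT_zero.comp hNin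
      exact tendsto_neg_atBot_atTop.comp tLog
    have hhφ : ∀ b : ℝ, h b = b * (N₁ b / N b) + φ b := fun b => by rw [hhdef, hφdef]; ring
    by_cases hbdd : ∃ M : ℝ, ∀ b : ℝ, 1 ≤ b → h b ≤ M
    · exfalso
      obtain ⟨M, hM⟩ := hbdd
      obtain ⟨β₁, hβ₁⟩ := ((tφ.eventually_ge_atTop (M + 1)).and (eventually_ge_atTop 1)).exists
      obtain ⟨hφβ₁, hβ₁1⟩ := hβ₁
      have hβ₁0 : (0:ℝ) < β₁ := lt_of_lt_of_le one_pos hβ₁1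
      set c : ℝ := (φ β₁ - M) / β₁ with hcdef
      have hc : 0 < c := div_pos (by linarith) hβ₁0
      have hψpos : ∀ b : ℝ, β₁ ≤ b → 0 < φ b - M := by
        intro b hb
        have := hφmono (Set.mem_Ici.2 hβ₁1) (Set.mem_Ici.2 (le_trans hβ₁1 hb)) hb
        linarith
      set G : ℝ → ℝ := fun b => Real.log (φ b - M) - Real.log b with hGdef
      have hG : ∀ b : ℝ, β₁ ≤ b → HasDerivAt G ((-(N₁ b / N b)) / (φ b - M) - b⁻¹) b := by
        intro b hb
        have hb0 : (0:ℝ) < b := lt_of_lt_of_le hβ₁0 hb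
        have h1 : HasDerivAt (fun u => φ u - M) (-(N₁ b / N b)) b := (hφ b hb0).sub_const M
        exact (h1.log (ne_of_gt (hψpos b hb))).sub (Real.hasDerivAt_log (ne_of_gt hb0))
      have hGmono : MonotoneOn G (Set.Ici β₁) := by
        apply monotoneOn_of_deriv_nonneg (convex_Ici β₁)
        · intro b hb
          exact ((hG b hb).continuousAt).continuousWithinAt
        · intro b hb
          rw [interior_Ici] at hb
          exact ((hG b hb.le).differentiableAt).differentiableWithinAt
        · intro b hb
          rw [interior_Ici] at hb
          have hb0 : (0:ℝ) < b := lt_of_lt_of_le hβ₁0 hb.le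
          rw [(hG b hb.le).deriv]
          have hψ := hψpos b hb.le
          have hhb := hM b (le_trans hβ₁1 hb.le)
          rw [hhφ b] at hhb
          have key : φ b - M ≤ b * (-(N₁ b / N b)) := by linarith
          rw [sub_nonneg, inv_eq_one_div, div_le_div_iff₀ hb0 hψ]
          nlinarith
      have growth : ∀ b : ℝ, β₁ ≤ b → c * b ≤ φ b - M := by
        intro b hb
        have hb0 : (0:ℝ) < b := lt_of_lt_of_le hβ₁0 hb
        have := hGmono (Set.mem_Ici.2 le_rfl) (Set.mem_Ici.2 hb) hb
        rw [hGdef] at this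
        simp only at this
        have hψb := hψpos b hb
        have hψβ₁ := hψpos β₁ le_rfl
        have hlog : Real.log (c * b) ≤ Real.log (φ b - M) := by
          rw [hcdef]
          have e : (φ β₁ - M) / β₁ * b = (φ β₁ - M) * b / β₁ := by ring
          rw [e, Real.log_div (by positivity) (ne_of_gt hβ₁0),
            Real.log_mul (ne_of_gt hψβ₁) (ne_of_gt hb0)]
          linarith
        have := Real.exp_le_exp.2 hlog
        rwa [Real.exp_log (by positivity), Real.exp_log hψb] at this
      -- sublinearity
      obtain ⟨q, hq⟩ : ∃ q : ℝ, 0 < q ∧ ∀ b : ℝ, 0 ≤ b →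
          Real.exp (-(b * (c / 2))) * q ≤ N b := by
        have hq0 : 0 < μ {x | s - c / 2 < X x} := hs _ (by linarith)
        refine ⟨(μ {x | s - c / 2 < X x}).toReal,
          ENNReal.toReal_pos (ne_of_gt hq0) (measure_ne_top μ _), ?_⟩
        intro b hb
        have hA : MeasurableSet {x | s - c / 2 < X x} := by
          have : {x | s - c / 2 < X x} = X ⁻¹' Set.Ioi (s - c / 2) := rfl
          rw [this]; exact hmeas measurableSet_Ioi
        have hpt : ∀ x : Ω, Set.indicator {x | s - c / 2 < X x}
            (fun _ => Real.exp (-(b * (c / 2)))) x ≤ Real.exp (b * Y x) := by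
          intro x
          by_cases hx : x ∈ {x | s - c / 2 < X x}
          · rw [Set.indicator_of_mem hx]
            apply Real.exp_le_exp.2
            have : -(c / 2) < Y x := by simp only [Set.mem_setOf_eq] at hx; simp [hYdef]; linarith
            nlinarith
          · rw [Set.indicator_of_notMem hx]
            exact (Real.exp_pos _).le
        rcases eq_or_lt_of_le hb with hb0 | hb0
        · -- b = 0
          rw [← hb0]
          simp only [zero_mul, neg_zero, Real.exp_zero, one_mul]
          have : N 0 = 1 := by
            rw [hNdef]; simp
          rw [this]
          have h9 := prob_le_one (μ := μ) (s := {x | s - c / 2 < X x})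
          simpa using ENNReal.toReal_mono ENNReal.one_ne_top h9
        · have := integral_mono ((integrable_const _).indicator hA) (iN b hb0) hpt
          rwa [integral_indicator_const _ hA, smul_eq_mul, mul_comm] at this
      obtain ⟨hqpos, hqbound⟩ := hq
      have hsub : ∀ b : ℝ, 0 ≤ b → φ b ≤ b * (c / 2) - Real.log q := by
        intro b hb
        have h1 := hqbound b hb
        have h2 : Real.log (Real.exp (-(b * (c / 2))) * q) ≤ Real.log (N b) := by
          rcases eq_or_lt_of_le hb with hb0 | hb0
          · apply Real.log_le_log (by positivity) h1
          · apply Real.log_le_log (by positivity) h1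
        rw [Real.log_mul (Real.exp_ne_zero _) (ne_of_gt hqpos), Real.log_exp] at h2
        rw [hφdef]
        simp only
        linarith
      -- contradiction
      set T : ℝ := |Real.log q| + |M| + 1 with hTdef
      set b : ℝ := max β₁ (2 / c * T) with hbdef
      have hbβ₁ : β₁ ≤ b := le_max_left _ _
      have hb0 : (0:ℝ) ≤ b := le_trans hβ₁0.le hbβ₁
      have h1 := growth b hbβ₁
      have h2 := hsub b hb0
      have h3 : 2 / c * T ≤ b := le_max_right _ _
      clear_value T b c φ N N₁
      have h4 : c / 2 * (2 / c * T) = T := by field_simp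
      have h5 : c / 2 * (2 / c * T) ≤ c / 2 * b := by
        apply mul_le_mul_of_nonneg_left h3 (by positivity)
      rw [h4] at h5
      have h6 : T ≤ -Real.log q - M := by linarith [h1, h2, h5]
      rw [hTdef] at h6
      have e1 : -Real.log q ≤ |Real.log q| := neg_le_abs _
      have e2 : -M ≤ |M| := neg_le_abs _
      linarith
    · push_neg at hbdd
      rw [Filter.tendsto_atTop]
      intro M
      obtain ⟨β₀, hβ₀1, hβ₀⟩ := hbdd M
      filter_upwards [eventually_ge_atTop β₀] with b hb
      exact le_trans hβ₀.le (hmono (Set.mem_Ici.2 hβ₀1) (Set.mem_Ici.2 (le_trans hβ₀1 hb)) hb)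
  · -- convergent case
    intro hp
    have hpt : 0 < (μ {x | X x = s}).toReal :=
      ENNReal.toReal_pos (ne_of_gt hp) (measure_ne_top μ _)
    apply Tendsto.congr' hfeq
    have t1 : Tendsto (fun b : ℝ => b * N₁ b / N b) atTop (nhds (0 / (μ {x | X x = s}).toReal)) :=
      tK.div tN (ne_of_gt hpt)
    have t2 : Tendsto (fun b : ℝ => Real.log (N b)) atTop
        (nhds (Real.log (μ {x | X x = s}).toReal)) :=
      ((Real.continuousAt_log (ne_of_gt hpt)).tendsto).comp tN
    have := t1.sub t2
    rw [zero_div, zero_sub] at this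
    refine this.congr fun b => ?_
    rw [hhdef]
    simp only
    ring
end
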